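/- Let α ∈ (0,1) and m ≥ 1. Then for all t ∈ [0,1], |∑_{k=0}^{2^m−1} τ^{1−α}_{1,2^m+k}(t)| ≤ c₁(α) · 2^{m(α−1)}, where c₁(α) = (2^α/Γ(2−α)) · (∑_{k≥1} |C_{(1−α)/2}(k)| + 2). -/

import Mathlib

open Set

/-- The function `τ^α_{1,2^m+k}`. -/
noncomputable def tau1 (α : ℝ) (m k : ℕ) (t : ℝ) : ℝ :=
  ((max (t - (k : ℝ) / 2 ^ m) 0) ^ α - 2 * (max (t - ((k : ℝ) + 0.5) / 2 ^ m) 0) ^ α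
    + (max (t - ((k : ℝ) + 1) / 2 ^ m) 0) ^ α) / Real.Gamma (1 + α)

/-- The covariance function of fractional Gaussian noise with Hurst index `H`. -/
noncomputable def fgnC (H t : ℝ) : ℝ :=
  (|t + 1| ^ (2 * H) - 2 * |t| ^ (2 * H) + |t - 1| ^ (2 * H)) / 2

/-- The constant `c₁(α)`. -/
noncomputable def c1 (α : ℝ) : ℝ :=
  (2 : ℝ) ^ α / Real.Gamma (2 - α) * ((∑' k : ℕ, |fgnC ((1 - α) / 2) ((k : ℝ) + 1)|) + 2)

/-- Subadditivity of `x ^ β` for `0 ≤ β ≤ 1`. -/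
lemma rpow_subadd {β a b : ℝ} (hβ0 : 0 ≤ β) (hβ1 : β ≤ 1) (ha : 0 ≤ a) (hb : 0 ≤ b) :
    (a + b) ^ β ≤ a ^ β + b ^ β := by
  lift a to NNReal using ha
  lift b to NNReal using hb
  have h := NNReal.rpow_add_le_add_rpow a b hβ0 hβ1
  rw [← NNReal.coe_add, ← NNReal.coe_rpow, ← NNReal.coe_rpow, ← NNReal.coe_rpow,
    ← NNReal.coe_add, NNReal.coe_le_coe]
  exact h

/-- Midpoint concavity of `x ^ β` for `0 ≤ β ≤ 1`. -/
lemma rpow_midpoint {β a b : ℝ} (hβ0 : 0 ≤ β) (hβ1 : β ≤ 1) (ha : 0 ≤ a) (hb : 0 ≤ b) :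
    a ^ β + b ^ β ≤ 2 * ((a + b) / 2) ^ β := by
  have h := (Real.concaveOn_rpow hβ0 hβ1).2 (Set.mem_Ici.2 ha) (Set.mem_Ici.2 hb)
    (by norm_num : (0:ℝ) ≤ 1/2) (by norm_num : (0:ℝ) ≤ 1/2) (by norm_num)
  simp only [smul_eq_mul] at h
  have e : (1/2 : ℝ) * a + (1/2 : ℝ) * b = (a + b) / 2 := by ring
  rw [e] at h
  linarith

theorem sum_tau1_uniform_bound (α : ℝ) (hα : α ∈ Set.Ioo (0 : ℝ) 1) (m : ℕ) (hm : 1 ≤ m)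
    (t : ℝ) (ht : t ∈ Set.Icc (0 : ℝ) 1) :
    |∑ k ∈ Finset.range (2 ^ m), tau1 (1 - α) m k t| ≤ c1 α * (2 : ℝ) ^ ((m : ℝ) * (α - 1)) := by
  obtain ⟨hα0, hα1⟩ := hα
  obtain ⟨ht0, ht1⟩ := ht
  set β : ℝ := 1 - α with hβdef
  have hβ0 : 0 < β := by simp only [hβdef]; linarith
  have hβ1 : β < 1 := by simp only [hβdef]; linarith
  set p : ℝ → ℝ := fun x => (max x 0) ^ β with hp
  have p_nonneg : ∀ x, 0 ≤ p x := fun x => Real.rpow_nonneg (le_max_right _ _) _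
  have p_mono : ∀ {x y : ℝ}, x ≤ y → p x ≤ p y := fun h =>
    Real.rpow_le_rpow (le_max_right _ _) (max_le_max h le_rfl) hβ0.le
  have p_zero : ∀ {x : ℝ}, x ≤ 0 → p x = 0 := fun h => by
    simp [hp, max_eq_right h, Real.zero_rpow hβ0.ne']
  have p_eq : ∀ {x : ℝ}, 0 ≤ x → p x = x ^ β := fun h => by
    simp [hp, max_eq_left h]
  have p_le_one : ∀ {x : ℝ}, x ≤ 1 → p x ≤ 1 := fun h =>
    Real.rpow_le_one (le_max_right _ _) (max_le h zero_le_one) hβ0.le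
  have p_le_two : ∀ {x : ℝ}, x ≤ 2 → p x ≤ 2 := by
    intro x h
    calc p x ≤ p 2 := p_mono h
      _ = (2:ℝ) ^ β := p_eq (by norm_num)
      _ ≤ (2:ℝ) ^ (1:ℝ) := Real.rpow_le_rpow_of_exponent_le one_le_two hβ1.le
      _ = 2 := Real.rpow_one 2
  set g : ℝ → ℝ := fun v => p v - p (v - 1) with hg
  have g_nonneg : ∀ v, 0 ≤ g v := fun v => sub_nonneg.2 (p_mono (by linarith))
  have g_le_one : ∀ v, g v ≤ 1 := by
    intro v
    rcases le_or_gt v 1 with h | h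
    · have h1 := p_le_one h
      have h2 := p_nonneg (v - 1)
      simp only [hg]; linarith
    · have hv1 : (0:ℝ) ≤ v - 1 := by linarith
      have h1 : p v ≤ p (v - 1) + 1 := by
        rw [p_eq hv1, p_eq (by linarith : (0:ℝ) ≤ v)]
        have h2 := rpow_subadd hβ0.le hβ1.le hv1 zero_le_one
        rw [Real.one_rpow] at h2
        have e : v - 1 + 1 = v := by ring
        rw [e] at h2
        exact h2
      simp only [hg]; linarith
  have g_step : ∀ {v : ℝ}, 2 ≤ v → g v ≤ g (v - 1) := by
    intro v hv
    have hm2 := rpow_midpoint hβ0.le hβ1.le (show (0:ℝ) ≤ v - 2 by linarith)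
      (show (0:ℝ) ≤ v by linarith)
    have e : (v - 2 + v) / 2 = v - 1 := by ring
    rw [e] at hm2
    simp only [hg]
    rw [p_eq (by linarith : (0:ℝ) ≤ v), p_eq (by linarith : (0:ℝ) ≤ v - 1),
      p_eq (by linarith : (0:ℝ) ≤ v - 1 - 1)]
    have e2 : v - 1 - 1 = v - 2 := by ring
    rw [e2]
    linarith
  have psi_eq : ∀ {u : ℝ}, 1 < u → |p (u + 1) - 2 * p u + p (u - 1)| = g u - g (u + 1) := by
    intro u hu
    have hm2 := rpow_midpoint hβ0.le hβ1.le (show (0:ℝ) ≤ u - 1 by linarith)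
      (show (0:ℝ) ≤ u + 1 by linarith)
    have e : (u - 1 + (u + 1)) / 2 = u := by ring
    rw [e] at hm2
    have e1 : p (u + 1) = (u + 1) ^ β := p_eq (by linarith)
    have e2 : p u = u ^ β := p_eq (by linarith)
    have e3 : p (u - 1) = (u - 1) ^ β := p_eq (by linarith)
    have hle : p (u + 1) - 2 * p u + p (u - 1) ≤ 0 := by
      rw [e1, e2, e3]; linarith
    rw [abs_of_nonpos hle]
    simp only [hg]
    have e4 : u + 1 - 1 = u := by ring
    rw [e4]
    ring
  -- the rescaled points
  set u : ℕ → ℝ := fun k => 2 ^ (m + 1) * t - 2 * k - 1 with hu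
  set ψ : ℕ → ℝ := fun k => |p (u k + 1) - 2 * p (u k) + p (u k - 1)| with hψ
  have mid_bound : ∀ k : ℕ, u k ≤ 1 → ψ k ≤ 2 := by
    intro k hk
    have h1 : p (u k - 1) = 0 := p_zero (by linarith)
    have h2 : p (u k + 1) ≤ 2 := p_le_two (by linarith)
    have h3 : p (u k) ≤ 1 := p_le_one (by linarith)
    have h4 := p_nonneg (u k + 1)
    have h5 := p_nonneg (u k)
    simp only [hψ, h1, add_zero]
    rw [abs_le]
    constructor <;> linarith
  have hΓ : 0 < Real.Gamma (1 + β) := Real.Gamma_pos_of_pos (by linarith)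
  have h2pos : (0:ℝ) < 2 ^ (m + 1) := by positivity
  -- rescaling identity
  have key : ∀ k : ℕ, tau1 (1 - α) m k t =
      ((2:ℝ) ^ (m + 1))⁻¹ ^ β * ((p (u k + 1) - 2 * p (u k) + p (u k - 1)) / Real.Gamma (1 + β)) := by
    intro k
    have hmax : ∀ x : ℝ, max (((2:ℝ) ^ (m + 1))⁻¹ * x) 0
        = ((2:ℝ) ^ (m + 1))⁻¹ * max x 0 := by
      intro x
      rw [mul_max_of_nonneg _ _ (by positivity : (0:ℝ) ≤ ((2:ℝ) ^ (m + 1))⁻¹), mul_zero]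
    have hscale : ∀ x : ℝ, max (((2:ℝ) ^ (m + 1))⁻¹ * x) 0 ^ β
        = ((2:ℝ) ^ (m + 1))⁻¹ ^ β * p x := by
      intro x
      rw [hmax, Real.mul_rpow (by positivity) (le_max_right _ _)]
    have e1 : t - (k : ℝ) / 2 ^ m = ((2:ℝ) ^ (m + 1))⁻¹ * (u k + 1) := by
      simp only [hu]
      rw [pow_succ]
      field_simp
      ring
    have e2 : t - ((k : ℝ) + 0.5) / 2 ^ m = ((2:ℝ) ^ (m + 1))⁻¹ * u k := by
      simp only [hu]
      rw [pow_succ]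
      field_simp
      ring
    have e3 : t - ((k : ℝ) + 1) / 2 ^ m = ((2:ℝ) ^ (m + 1))⁻¹ * (u k - 1) := by
      simp only [hu]
      rw [pow_succ]
      field_simp
      ring
    unfold tau1
    rw [e1, e2, e3, hscale, hscale, hscale]
    ring
  -- the sum of ψ over the relevant range is at most 4
  have sum_psi : ∑ k ∈ Finset.range (2 ^ m), ψ k ≤ 4 := by
    have bound : ∀ κ : ℕ, 2 ^ m * t ≤ (κ : ℝ) → (κ : ℝ) < 2 ^ m * t + 1 →
        ∑ k ∈ Finset.range κ, ψ k ≤ 4 := by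
      intro κ
      match κ with
      | 0 => intro _ _; simp
      | 1 =>
        intro h1 _
        rw [Finset.sum_range_one]
        have : u 0 ≤ 1 := by
          simp only [hu, pow_succ]
          push_cast at h1
          push_cast
          nlinarith
        have := mid_bound 0 this
        linarith
      | (κ' + 2) =>
        intro h1 h2
        push_cast at h1 h2
        have hs_lb : (κ' : ℝ) + 1 < 2 ^ m * t := by linarith
        have hs_ub : 2 ^ m * t ≤ (κ' : ℝ) + 2 := by linarith
        have hupow : (2:ℝ) ^ (m + 1) * t = 2 * (2 ^ m * t) := by rw [pow_succ]; ring
        rw [Finset.sum_range_succ, Finset.sum_range_succ]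
        have hlast : ψ (κ' + 1) ≤ 2 := by
          apply mid_bound
          simp only [hu, hupow]
          push_cast
          linarith
        have hsec : ψ κ' ≤ 1 := by
          have hu1 : 1 < u κ' := by
            simp only [hu, hupow]
            linarith
          simp only [hψ]
          rw [psi_eq hu1]
          have := g_le_one (u κ')
          have := g_nonneg (u κ' + 1)
          linarith
        have hsum : ∑ k ∈ Finset.range κ', ψ k ≤ 1 := by
          set G : ℕ → ℝ := fun k => g (2 ^ (m + 1) * t - 2 * k) with hG
          have hstep : ∀ k ∈ Finset.range κ', ψ k ≤ G (k + 1) - G k := by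
            intro k hk
            have hkκ : (k : ℝ) ≤ (κ' : ℝ) - 1 := by
              have := Finset.mem_range.1 hk
              have : (k : ℝ) + 1 ≤ (κ' : ℝ) := by exact_mod_cast this
              linarith
            have hu3 : 3 < u k := by
              simp only [hu, hupow]
              linarith
            simp only [hψ]
            rw [psi_eq (by linarith)]
            have hst := g_step (show 2 ≤ u k by linarith)
            have eG1 : G (k + 1) = g (u k - 1) := by
              simp only [hG, hu]
              push_cast
              ring_nf
            have eG0 : G k = g (u k + 1) := by
              simp only [hG, hu]
              ring_nf
            rw [eG1, eG0]
            linarith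
          calc ∑ k ∈ Finset.range κ', ψ k ≤ ∑ k ∈ Finset.range κ', (G (k + 1) - G k) :=
                Finset.sum_le_sum hstep
            _ = G κ' - G 0 := Finset.sum_range_sub G κ'
            _ ≤ 1 := by
                have e1 : G κ' = g (u κ' + 1) := by
                  simp only [hG, hu]; ring_nf
                have := g_le_one (u κ' + 1)
                have hG0 : 0 ≤ G 0 := g_nonneg _
                rw [e1]
                linarith
        linarith
    set κ := ⌈(2:ℝ) ^ m * t⌉₊ with hκdef
    have hs0 : (0:ℝ) ≤ 2 ^ m * t := by positivity
    have hκle : κ ≤ 2 ^ m := by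
      rw [hκdef]
      apply Nat.ceil_le.2
      push_cast
      nlinarith [pow_pos (show (0:ℝ) < 2 by norm_num) m]
    have htrunc : ∑ k ∈ Finset.range (2 ^ m), ψ k = ∑ k ∈ Finset.range κ, ψ k := by
      symm
      apply Finset.sum_subset (Finset.range_subset_range.2 hκle)
      intro k _ hk
      rw [Finset.mem_range, not_lt] at hk
      have hκs : (2:ℝ) ^ m * t ≤ (κ : ℝ) := Nat.le_ceil _
      have hkk : (κ : ℝ) ≤ (k : ℝ) := by exact_mod_cast hk
      have huk : u k + 1 ≤ 0 := by
        simp only [hu, pow_succ]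
        nlinarith
      simp only [hψ, p_zero huk, p_zero (show u k ≤ 0 by linarith),
        p_zero (show u k - 1 ≤ 0 by linarith)]
      simp
    rw [htrunc]
    exact bound κ (Nat.le_ceil _) (Nat.ceil_lt_add_one hs0)
  -- put everything together
  have cβpos : (0:ℝ) < ((2:ℝ) ^ (m + 1))⁻¹ ^ β := Real.rpow_pos_of_pos (by positivity) _
  have habs : |∑ k ∈ Finset.range (2 ^ m), tau1 (1 - α) m k t|
      ≤ ((2:ℝ) ^ (m + 1))⁻¹ ^ β * 4 / Real.Gamma (1 + β) := by
    calc |∑ k ∈ Finset.range (2 ^ m), tau1 (1 - α) m k t|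
        ≤ ∑ k ∈ Finset.range (2 ^ m), |tau1 (1 - α) m k t| :=
          Finset.abs_sum_le_sum_abs _ _
      _ = ∑ k ∈ Finset.range (2 ^ m), ((2:ℝ) ^ (m + 1))⁻¹ ^ β * (ψ k / Real.Gamma (1 + β)) := by
          apply Finset.sum_congr rfl
          intro k _
          rw [key k, abs_mul, abs_div, abs_of_pos cβpos, abs_of_pos hΓ]
      _ = ((2:ℝ) ^ (m + 1))⁻¹ ^ β / Real.Gamma (1 + β) * ∑ k ∈ Finset.range (2 ^ m), ψ k := by
          rw [Finset.mul_sum]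
          apply Finset.sum_congr rfl
          intro k _
          ring
      _ ≤ ((2:ℝ) ^ (m + 1))⁻¹ ^ β / Real.Gamma (1 + β) * 4 := by
          apply mul_le_mul_of_nonneg_left sum_psi (by positivity)
      _ = ((2:ℝ) ^ (m + 1))⁻¹ ^ β * 4 / Real.Gamma (1 + β) := by ring
  refine habs.trans ?_
  -- final numeric comparison
  have hT : (0:ℝ) ≤ ∑' k : ℕ, |fgnC ((1 - α) / 2) ((k : ℝ) + 1)| :=
    tsum_nonneg fun k => abs_nonneg _
  have hΓeq : Real.Gamma (2 - α) = Real.Gamma (1 + β) := by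
    have e : (2:ℝ) - α = 1 + β := by rw [hβdef]; ring
    rw [e]
  have hexp : ((2:ℝ) ^ (m + 1))⁻¹ ^ β * 2 = (2:ℝ) ^ α * (2:ℝ) ^ ((m : ℝ) * (α - 1)) := by
    have e1 : ((2:ℝ) ^ (m + 1) : ℝ) = (2:ℝ) ^ ((m + 1 : ℕ) : ℝ) := (Real.rpow_natCast 2 (m + 1)).symm
    rw [e1, ← Real.rpow_neg (by norm_num : (0:ℝ) ≤ 2)]
    calc ((2:ℝ) ^ (-((m + 1 : ℕ) : ℝ))) ^ β * 2
        = (2:ℝ) ^ (-((m + 1 : ℕ) : ℝ) * β + 1) := by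
          rw [Real.rpow_add (by norm_num : (0:ℝ) < 2), ← Real.rpow_mul (by norm_num : (0:ℝ) ≤ 2),
            Real.rpow_one]
      _ = (2:ℝ) ^ (α + (m : ℝ) * (α - 1)) := by
          congr 1
          push_cast
          rw [hβdef]
          ring
      _ = (2:ℝ) ^ α * (2:ℝ) ^ ((m : ℝ) * (α - 1)) :=
          Real.rpow_add (by norm_num : (0:ℝ) < 2) _ _
  have hA : (0:ℝ) ≤ (2:ℝ) ^ α * (2:ℝ) ^ ((m : ℝ) * (α - 1)) := by positivity
  have h4 : ((2:ℝ) ^ (m + 1))⁻¹ ^ β * 4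
      ≤ (2:ℝ) ^ α * (2:ℝ) ^ ((m : ℝ) * (α - 1))
        * ((∑' k : ℕ, |fgnC ((1 - α) / 2) ((k : ℝ) + 1)|) + 2) := by
    nlinarith [mul_nonneg hA hT]
  have hfin : ((2:ℝ) ^ (m + 1))⁻¹ ^ β * 4 / Real.Gamma (1 + β)
      ≤ c1 α * (2 : ℝ) ^ ((m : ℝ) * (α - 1)) := by
    have : c1 α * (2 : ℝ) ^ ((m : ℝ) * (α - 1))
        = (2:ℝ) ^ α * (2:ℝ) ^ ((m : ℝ) * (α - 1))
          * ((∑' k : ℕ, |fgnC ((1 - α) / 2) ((k : ℝ) + 1)|) + 2) / Real.Gamma (1 + β) := by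
      unfold c1
      rw [hΓeq]
      ring
    rw [this]
    gcongr
  exact hfin
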